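/- In the formal power series ring ℂ[[x]], the following identity holds: G(x/(2πi)) · G(-x/(2πi)) = e^{-x/2} · T(x), where G(y) ∈ ℂ[[y]] is the Taylor expansion at 0 of y ↦ Γ(1+y) (the Gamma function), and T(x) ∈ ℂ[[x]] is the Taylor expansion at 0 of x ↦ x/(1 - e^{-x}) (the Todd series). -/

import Mathlib

open Complex FormalMultilinearSeries Finset

noncomputable section Stmt15Aux

/-- `f` is represented near `0` by the power series `A`. -/
def HasRep15 (f : ℂ → ℂ) (A : PowerSeries ℂ) : Prop :=
  ∀ᶠ z in nhds (0 : ℂ), HasSum (fun n => (PowerSeries.coeff n A) * z ^ n) (f z)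

lemma ofScalars_coeff15 (a : ℕ → ℂ) (n : ℕ) :
    (FormalMultilinearSeries.ofScalars ℂ a).coeff n = a n := by
  rw [FormalMultilinearSeries.coeff]
  have := FormalMultilinearSeries.ofScalars_apply_eq (E := ℂ) a 1 n
  simpa using this

lemma hasRep15_iff (f : ℂ → ℂ) (A : PowerSeries ℂ) :
    HasRep15 f A ↔ HasFPowerSeriesAt f
      (FormalMultilinearSeries.ofScalars ℂ (fun n => PowerSeries.coeff n A)) 0 := by
  rw [hasFPowerSeriesAt_iff]
  refine Filter.eventually_congr (Filter.Eventually.of_forall fun z => ?_)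
  have h : (fun n => (PowerSeries.coeff n A) * z ^ n)
      = fun n => z ^ n • (FormalMultilinearSeries.ofScalars ℂ
        (fun n => PowerSeries.coeff n A)).coeff n := by
    funext n; rw [ofScalars_coeff15, smul_eq_mul, mul_comm]
  rw [h, zero_add]

lemma HasRep15.unique {f : ℂ → ℂ} {A B : PowerSeries ℂ}
    (hA : HasRep15 f A) (hB : HasRep15 f B) : A = B := by
  rw [hasRep15_iff] at hA hB
  have h := hA.eq_formalMultilinearSeries hB
  ext n
  have h2 := congrArg (fun p => FormalMultilinearSeries.coeff p n) h
  simpa [ofScalars_coeff15] using h2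

lemma HasRep15.congr {f g : ℂ → ℂ} {A : PowerSeries ℂ}
    (hA : HasRep15 f A) (h : ∀ᶠ z in nhds (0 : ℂ), f z = g z) : HasRep15 g A := by
  filter_upwards [hA, h] with z h1 h2
  rwa [h2] at h1

lemma HasRep15.mul {f g : ℂ → ℂ} {A B : PowerSeries ℂ}
    (hA : HasRep15 f A) (hB : HasRep15 g B) : HasRep15 (fun z => f z * g z) (A * B) := by
  rw [hasRep15_iff] at hA hB
  obtain ⟨r1, hr1⟩ := hA
  obtain ⟨r2, hr2⟩ := hB
  have hrpos : (0 : ENNReal) < min r1 r2 := lt_min hr1.r_pos hr2.r_pos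
  have hmem : EMetric.ball (0:ℂ) (min r1 r2) ∈ nhds (0:ℂ) := EMetric.ball_mem_nhds 0 hrpos
  filter_upwards [hmem] with z hz
  change z ∈ Metric.eball 0 (min r1 r2) at hz
  rw [mem_emetric_ball_zero_iff] at hz
  have hz1 : (‖z‖₊ : ENNReal) < r1 := lt_of_lt_of_le hz (min_le_left _ _)
  have hz2 : (‖z‖₊ : ENNReal) < r2 := lt_of_lt_of_le hz (min_le_right _ _)
  have e1 : (fun n => ((FormalMultilinearSeries.ofScalars ℂ
        (fun n => PowerSeries.coeff n A)) n fun _ => z))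
      = fun n => (PowerSeries.coeff n A) * z ^ n := by
    funext n; rw [FormalMultilinearSeries.ofScalars_apply_eq, smul_eq_mul]
  have e2 : (fun n => ((FormalMultilinearSeries.ofScalars ℂ
        (fun n => PowerSeries.coeff n B)) n fun _ => z))
      = fun n => (PowerSeries.coeff n B) * z ^ n := by
    funext n; rw [FormalMultilinearSeries.ofScalars_apply_eq, smul_eq_mul]
  have hs1 : HasSum (fun n => (PowerSeries.coeff n A) * z ^ n) (f z) := by
    have := hr1.hasSum (by rwa [mem_emetric_ball_zero_iff])
    rw [e1] at this; simpa using this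
  have hs2 : HasSum (fun n => (PowerSeries.coeff n B) * z ^ n) (g z) := by
    have := hr2.hasSum (by rwa [mem_emetric_ball_zero_iff])
    rw [e2] at this; simpa using this
  have hn1 : Summable fun n => ‖(PowerSeries.coeff n A) * z ^ n‖ := by
    have h := (FormalMultilinearSeries.ofScalars ℂ
      (fun n => PowerSeries.coeff n A)).summable_norm_mul_pow (lt_of_lt_of_le hz1 hr1.r_le)
    refine h.congr fun n => ?_
    rw [FormalMultilinearSeries.ofScalars_norm, norm_mul, norm_pow, coe_nnnorm]
  have hn2 : Summable fun n => ‖(PowerSeries.coeff n B) * z ^ n‖ := by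
    have h := (FormalMultilinearSeries.ofScalars ℂ
      (fun n => PowerSeries.coeff n B)).summable_norm_mul_pow (lt_of_lt_of_le hz2 hr2.r_le)
    refine h.congr fun n => ?_
    rw [FormalMultilinearSeries.ofScalars_norm, norm_mul, norm_pow, coe_nnnorm]
  have hsum : Summable fun n => ∑ kl ∈ Finset.HasAntidiagonal.antidiagonal n,
      ((PowerSeries.coeff kl.1 A) * z ^ kl.1) * ((PowerSeries.coeff kl.2 B) * z ^ kl.2) :=
    (summable_norm_sum_mul_antidiagonal_of_summable_norm hn1 hn2).of_norm
  have htsum := tsum_mul_tsum_eq_tsum_sum_antidiagonal_of_summable_norm hn1 hn2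
  rw [hs1.tsum_eq, hs2.tsum_eq] at htsum
  have key : HasSum (fun n => ∑ kl ∈ Finset.HasAntidiagonal.antidiagonal n,
      ((PowerSeries.coeff kl.1 A) * z ^ kl.1) * ((PowerSeries.coeff kl.2 B) * z ^ kl.2))
      (f z * g z) := hsum.hasSum_iff.mpr htsum.symm
  have e3 : (fun n => (PowerSeries.coeff n (A * B)) * z ^ n)
      = fun n => ∑ kl ∈ Finset.HasAntidiagonal.antidiagonal n,
        ((PowerSeries.coeff kl.1 A) * z ^ kl.1) * ((PowerSeries.coeff kl.2 B) * z ^ kl.2) := by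
    funext n
    rw [PowerSeries.coeff_mul, Finset.sum_mul]
    refine Finset.sum_congr rfl fun kl hkl => ?_
    rw [Finset.HasAntidiagonal.mem_antidiagonal] at hkl
    rw [← hkl, pow_add]; ring
  rw [e3]
  exact key

end Stmt15Aux

section Stmt15Aux2
open Complex FormalMultilinearSeries

lemma AnalyticAt.hasRep15 {f : ℂ → ℂ} (hf : AnalyticAt ℂ f 0) :
    HasRep15 f (PowerSeries.mk fun n => iteratedDeriv n f 0 / (n.factorial : ℂ)) := by
  obtain ⟨p, hp⟩ := hf
  obtain ⟨r, hr⟩ := hp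
  have hp : HasFPowerSeriesAt f p 0 := ⟨r, hr⟩
  have hcoeff : ∀ n, p.coeff n = iteratedDeriv n f 0 / (n.factorial : ℂ) := by
    intro n
    have h := hr.factorial_smul 1 n
    have h2 : iteratedDeriv n f 0 = iteratedFDeriv ℂ n f 0 fun _ => 1 :=
      iteratedDeriv_eq_iteratedFDeriv
    rw [← h2] at h
    have h3 : (n.factorial : ℂ) * (p n fun _ => (1:ℂ)) = iteratedDeriv n f 0 := by
      rw [← h, nsmul_eq_mul]
    have h4 : (p n fun _ => (1:ℂ)) = p.coeff n := rfl
    rw [h4] at h3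
    field_simp [Nat.cast_ne_zero.mpr n.factorial_ne_zero] at h3 ⊢
    linear_combination h3
  rw [HasRep15]
  have := hasFPowerSeriesAt_iff.mp hp
  filter_upwards [this] with z hz
  have e : (fun n => (PowerSeries.coeff n
      (PowerSeries.mk fun n => iteratedDeriv n f 0 / (n.factorial : ℂ))) * z ^ n)
      = fun n => z ^ n • p.coeff n := by
    funext n
    rw [PowerSeries.coeff_mk, ← hcoeff n, smul_eq_mul, mul_comm]
  rw [e]
  simpa using hz

lemma HasRep15.rescale {f : ℂ → ℂ} {A : PowerSeries ℂ} (c : ℂ) (hA : HasRep15 f A) :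
    HasRep15 (fun z => f (c * z)) (PowerSeries.rescale c A) := by
  have hcont : Filter.Tendsto (fun z : ℂ => c * z) (nhds 0) (nhds 0) := by
    have : Continuous fun z : ℂ => c * z := continuous_const.mul continuous_id
    simpa using this.tendsto 0
  filter_upwards [hcont.eventually hA] with z hz
  have e : (fun n => (PowerSeries.coeff n (PowerSeries.rescale c A)) * z ^ n)
      = fun n => (PowerSeries.coeff n A) * (c * z) ^ n := by
    funext n
    rw [PowerSeries.coeff_rescale, mul_pow]; ring
  rw [e]
  exact hz

lemma hasRep15_exp (d : ℂ) :
    HasRep15 (fun z => Complex.exp (d * z)) (PowerSeries.mk fun k => d ^ k / (k.factorial : ℂ)) := by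
  refine Filter.Eventually.of_forall fun z => ?_
  have h : HasSum (fun n => (d * z) ^ n / (n.factorial : ℂ)) (Complex.exp (d * z)) := by
    rw [Complex.exp_eq_exp_ℂ]
    exact NormedSpace.expSeries_div_hasSum_exp (d * z)
  have e : (fun n => (PowerSeries.coeff n
      (PowerSeries.mk fun k => d ^ k / (k.factorial : ℂ))) * z ^ n)
      = fun n => (d * z) ^ n / (n.factorial : ℂ) := by
    funext n
    rw [PowerSeries.coeff_mk, mul_pow]; ring
  rw [e]
  exact h

lemma hasRep15_one_sub_exp :
    HasRep15 (fun z => 1 - Complex.exp (-z))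
      (PowerSeries.mk fun k => if k = 0 then 0 else -((-1 : ℂ) ^ k / (k.factorial : ℂ))) := by
  refine Filter.Eventually.of_forall fun z => ?_
  have h : HasSum (fun n => (-z) ^ n / (n.factorial : ℂ)) (Complex.exp (-z)) := by
    rw [Complex.exp_eq_exp_ℂ]
    exact NormedSpace.expSeries_div_hasSum_exp (-z)
  have h2 := (h.neg.update 0 0)
  have e : Function.update (fun n => -((-z) ^ n / (n.factorial : ℂ))) 0 0
      = fun n => (PowerSeries.coeff n (PowerSeries.mk fun k =>
          if k = 0 then 0 else -((-1 : ℂ) ^ k / (k.factorial : ℂ)))) * z ^ n := by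
    funext n
    rcases eq_or_ne n 0 with h0 | h0
    · subst h0; simp
    · rw [Function.update_of_ne h0, PowerSeries.coeff_mk, if_neg h0, neg_pow]
      ring
  rw [← e]
  convert h2 using 1
  · rfl
  simp only [pow_zero, Nat.factorial_zero, Nat.cast_one, div_one, zero_sub, neg_neg]
  ring

lemma hasRep15_X : HasRep15 (fun z => z) (PowerSeries.X : PowerSeries ℂ) := by
  refine Filter.Eventually.of_forall fun z => ?_
  have e : (fun n => (PowerSeries.coeff n (PowerSeries.X : PowerSeries ℂ)) * z ^ n)
      = fun n => if n = 1 then z else 0 := by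
    funext n
    rw [PowerSeries.coeff_X]
    rcases eq_or_ne n 1 with h1 | h1
    · subst h1; simp
    · simp [h1]
  rw [e]
  exact hasSum_ite_eq 1 z

lemma analyticAt_Gamma_one_add : AnalyticAt ℂ (fun y : ℂ => Complex.Gamma (1 + y)) 0 := by
  have h1 : AnalyticAt ℂ Complex.Gamma 1 := by
    refine DifferentiableOn.analyticAt (s := {z : ℂ | 0 < z.re}) ?_ ?_
    · intro z hz
      refine (Complex.differentiableAt_Gamma z fun m => ?_).differentiableWithinAt
      intro hzm
      rw [hzm] at hz
      simp only [Set.mem_setOf_eq, neg_re, natCast_re] at hz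
      have : (0:ℝ) ≤ m := Nat.cast_nonneg m
      linarith
    · have : IsOpen {z : ℂ | 0 < z.re} := by
        exact isOpen_lt continuous_const Complex.continuous_re
      refine this.mem_nhds ?_
      simp
  have h2 : AnalyticAt ℂ (fun y : ℂ => 1 + y) 0 := analyticAt_const.add analyticAt_id
  have h3 := AnalyticAt.comp (g := Complex.Gamma) (f := fun y : ℂ => 1 + y) (x := 0)
    (by simpa using h1) h2
  exact h3

end Stmt15Aux2

section Stmt15Main
open Complex

lemma stmt15_fun_eq : ∀ᶠ z in nhds (0:ℂ),
    (Complex.Gamma (1 + (1/(2*(Real.pi:ℂ)*Complex.I)) * z) *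
     Complex.Gamma (1 + (-(1/(2*(Real.pi:ℂ)*Complex.I))) * z)) * (1 - Complex.exp (-z))
    = Complex.exp ((-(1:ℂ)/2) * z) * z := by
  have hball : Metric.ball (0:ℂ) 1 ∈ nhds (0:ℂ) := Metric.ball_mem_nhds 0 one_pos
  filter_upwards [hball] with z hz
  rw [mem_ball_zero_iff] at hz
  rcases eq_or_ne z 0 with rfl | hz0
  · simp
  have hπ : (Real.pi : ℂ) ≠ 0 := Complex.ofReal_ne_zero.mpr Real.pi_ne_zero
  have hI : Complex.I ≠ 0 := Complex.I_ne_zero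
  have hc : (2*(Real.pi:ℂ)*Complex.I) ≠ 0 := by simp [hπ, hI]
  set w : ℂ := (1/(2*(Real.pi:ℂ)*Complex.I)) * z with hw_def
  have hw : w ≠ 0 := mul_ne_zero (one_div_ne_zero hc) hz0
  have hπw : (Real.pi:ℂ) * w = -(z * Complex.I) / 2 := by
    rw [hw_def]
    field_simp
    ring_nf
    rw [Complex.I_sq]
    ring
  have hsin : Complex.sin ((Real.pi:ℂ) * w)
      = -((Complex.exp (z/2) - Complex.exp (-(z/2)))/2 * Complex.I) := by
    rw [hπw, show -(z * Complex.I) / 2 = -((z/2) * Complex.I) by ring,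
      Complex.sin_neg, Complex.sin_mul_I,
      show Complex.sinh (z/2) = (Complex.exp (z/2) - Complex.exp (-(z/2)))/2 from rfl]
  have huv : Complex.exp (-(z/2)) * Complex.exp (z/2) = 1 := by
    rw [← Complex.exp_add]; norm_num
  have hsin_ne : Complex.sin ((Real.pi:ℂ) * w) ≠ 0 := by
    rw [hsin]
    intro h
    have h2 : Complex.exp (z/2) = Complex.exp (-(z/2)) := by
      field_simp at h
      rw [mul_zero, neg_eq_zero] at h
      rcases mul_eq_zero.mp h with h' | h'
      · have := sub_eq_zero.mp h'
        simpa [neg_div] using this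
      · exact absurd h' hI
    rw [Complex.exp_eq_exp_iff_exists_int] at h2
    obtain ⟨n, hn⟩ := h2
    have hzn : z = n * (2 * (Real.pi:ℂ) * Complex.I) := by linear_combination hn
    rcases eq_or_ne n 0 with rfl | hn0
    · rw [Int.cast_zero, zero_mul] at hzn
      exact hz0 hzn
    · have h1 : (1:ℝ) ≤ ‖z‖ := by
        rw [hzn, norm_mul]
        have hn1 : (1:ℝ) ≤ ‖(n:ℂ)‖ := by
          rw [show ((n:ℂ)) = ((n:ℝ):ℂ) by push_cast; ring, Complex.norm_real,
            Real.norm_eq_abs, show ((n:ℝ)) = ((n:ℤ):ℝ) from rfl, ← Int.cast_abs]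
          exact_mod_cast Int.one_le_abs hn0
        have hn2 : (1:ℝ) ≤ ‖(2*(Real.pi:ℂ)*Complex.I)‖ := by
          rw [norm_mul, norm_mul, Complex.norm_I, mul_one]
          have : ‖(2:ℂ)‖ = 2 := by norm_num
          rw [this, Complex.norm_real, Real.norm_eq_abs, abs_of_pos Real.pi_pos]
          nlinarith [Real.pi_gt_three]
        nlinarith [norm_nonneg (n:ℂ)]
      linarith
  have e1 : 1 + (1/(2*(Real.pi:ℂ)*Complex.I)) * z = w + 1 := by rw [hw_def]; ring
  have e2 : 1 + (-(1/(2*(Real.pi:ℂ)*Complex.I))) * z = 1 - w := by rw [hw_def]; ring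
  rw [e1, e2, Complex.Gamma_add_one w hw,
    show w * Complex.Gamma w * Complex.Gamma (1-w) * (1 - Complex.exp (-z))
      = w * (Complex.Gamma w * Complex.Gamma (1-w)) * (1 - Complex.exp (-z)) by ring,
    Complex.Gamma_mul_Gamma_one_sub w]
  have hez : Complex.exp (-z) = Complex.exp (-(z/2)) * Complex.exp (-(z/2)) := by
    rw [← Complex.exp_add]; ring_nf
  have hev : Complex.exp ((-(1:ℂ)/2) * z) = Complex.exp (-(z/2)) := by
    congr 1; ring
  set u := Complex.exp (z/2) with hu_def
  set v := Complex.exp (-(z/2)) with hv_def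
  rw [hez, hev]
  have key : w * (Real.pi:ℂ) * (1 - v*v) = v * z * (-((u-v)/2*Complex.I)) := by
    linear_combination (1 - v*v) * hπw + (z*Complex.I/2) * huv
  have expand : w * ((Real.pi:ℂ) / Complex.sin ((Real.pi:ℂ)*w)) * (1 - v*v)
      = w * (Real.pi:ℂ) * (1 - v*v) / Complex.sin ((Real.pi:ℂ)*w) := by ring
  rw [expand, key, hsin]
  rw [hsin] at hsin_ne
  exact mul_div_cancel_right₀ _ hsin_ne

/-- In `ℂ[[x]]` one has `G(x/(2πi)) · G(-x/(2πi)) = e^{-x/2} · T(x)`, where `G` is the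
Taylor expansion at `0` of `y ↦ Γ(1+y)` and `T` is the Todd series, the Taylor expansion
at `0` of `x/(1-e^{-x})`, characterized as the unique power series with
`T(x) · (1 - e^{-x}) = x` (the factor `1 - e^{-x}` being taken as a power series). -/
theorem stmt15 (G T : PowerSeries ℂ)
    (hG : G = PowerSeries.mk fun k =>
      iteratedDeriv k (fun y : ℂ => Complex.Gamma (1 + y)) 0 / (k.factorial : ℂ))
    (hT : T * (PowerSeries.mk fun k =>
        if k = 0 then 0 else -((-1 : ℂ) ^ k / (k.factorial : ℂ)))
      = PowerSeries.X) :
    PowerSeries.rescale (1 / (2 * (Real.pi : ℂ) * Complex.I)) G *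
        PowerSeries.rescale (-(1 / (2 * (Real.pi : ℂ) * Complex.I))) G
      = (PowerSeries.mk fun k => (-(1 : ℂ) / 2) ^ k / (k.factorial : ℂ)) * T := by
  have hGamma : HasRep15 (fun y : ℂ => Complex.Gamma (1 + y)) G := by
    rw [hG]; exact analyticAt_Gamma_one_add.hasRep15
  have h1 : HasRep15 (fun z => Complex.Gamma (1 + (1 / (2 * (Real.pi : ℂ) * Complex.I)) * z))
      (PowerSeries.rescale (1 / (2 * (Real.pi : ℂ) * Complex.I)) G) :=
    hGamma.rescale _
  have h2 : HasRep15 (fun z => Complex.Gamma (1 + (-(1 / (2 * (Real.pi : ℂ) * Complex.I))) * z))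
      (PowerSeries.rescale (-(1 / (2 * (Real.pi : ℂ) * Complex.I))) G) :=
    hGamma.rescale _
  have hS : HasRep15 (fun z => 1 - Complex.exp (-z))
      (PowerSeries.mk fun k => if k = 0 then 0 else -((-1 : ℂ) ^ k / (k.factorial : ℂ))) :=
    hasRep15_one_sub_exp
  have hE : HasRep15 (fun z => Complex.exp ((-(1:ℂ)/2) * z))
      (PowerSeries.mk fun k => (-(1 : ℂ) / 2) ^ k / (k.factorial : ℂ)) :=
    hasRep15_exp _
  have hX : HasRep15 (fun z => z) (PowerSeries.X : PowerSeries ℂ) := hasRep15_X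
  have hLHS : HasRep15
      (fun z => (Complex.Gamma (1 + (1 / (2 * (Real.pi : ℂ) * Complex.I)) * z) *
        Complex.Gamma (1 + (-(1 / (2 * (Real.pi : ℂ) * Complex.I))) * z)) *
        (1 - Complex.exp (-z)))
      ((PowerSeries.rescale (1 / (2 * (Real.pi : ℂ) * Complex.I)) G *
        PowerSeries.rescale (-(1 / (2 * (Real.pi : ℂ) * Complex.I))) G) *
        (PowerSeries.mk fun k => if k = 0 then 0 else -((-1 : ℂ) ^ k / (k.factorial : ℂ)))) :=
    (h1.mul h2).mul hS
  have hRHS : HasRep15 (fun z => Complex.exp ((-(1:ℂ)/2) * z) * z)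
      ((PowerSeries.mk fun k => (-(1 : ℂ) / 2) ^ k / (k.factorial : ℂ)) *
        (PowerSeries.X : PowerSeries ℂ)) :=
    hE.mul hX
  have hmain := HasRep15.unique (hLHS.congr stmt15_fun_eq) hRHS
  have hS0 : (PowerSeries.mk fun k =>
      if k = 0 then 0 else -((-1 : ℂ) ^ k / (k.factorial : ℂ))) ≠ 0 := by
    intro h
    have := congrArg (PowerSeries.coeff 1) h
    simp at this
  refine mul_right_cancel₀ hS0 ?_
  rw [hmain, ← hT]
  ring
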